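/- Let R be a Noetherian integral domain of prime characteristic p that has a module-finite extension domain S (R ⊆ S, S a domain, finitely generated as an R-module) in which tight closure commutes with localization. Then tight closure commutes with localization in R. -/

import Mathlib

/-- The `q`-th Frobenius power `I^{[q]}` of an ideal `I`: the ideal generated by
`q`-th powers of elements of `I`. -/
def Ideal.frobeniusPower {R : Type*} [CommRing R] (I : Ideal R) (q : ℕ) : Ideal R :=
  Ideal.span ((fun x => x ^ q) '' (I : Set R))

/-- `R°`: the set of elements of `R` not contained in any minimal prime of `R`. -/
def primeComplement (R : Type*) [CommRing R] : Set R :=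
  { c | ∀ P ∈ minimalPrimes R, c ∉ P }

/-- The tight closure `I*` of an ideal `I` in a ring of characteristic `p`:
elements `z` such that `c * z ^ (p ^ e) ∈ I ^ [p ^ e]` for some `c ∈ R°`
and all sufficiently large `e`. -/
def tightClosure (p : ℕ) {R : Type*} [CommRing R] (I : Ideal R) : Set R :=
  { z | ∃ c ∈ primeComplement R, ∃ N : ℕ, ∀ e : ℕ, N ≤ e →
      c * z ^ p ^ e ∈ I.frobeniusPower (p ^ e) }

/-- Tight closure commutes with localization in `R`: for every ideal `I` and
multiplicative set `U`, `I* · R[U⁻¹] = (I · R[U⁻¹])*`. -/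
def TightClosureCommutesWithLocalization (p : ℕ) (R : Type*) [CommRing R] : Prop :=
  ∀ (I : Ideal R) (U : Submonoid R),
    (Ideal.map (algebraMap R (Localization U)) (Ideal.span (tightClosure p I)) :
        Set (Localization U))
      = tightClosure p (Ideal.map (algebraMap R (Localization U)) I)

/-- A ring is F-regular if every ideal is tightly closed, both in the ring itself
and in all of its localizations. -/
def FRegular (p : ℕ) (S : Type*) [CommRing S] : Prop :=
  (∀ I : Ideal S, tightClosure p I = (I : Set S)) ∧
    ∀ (U : Submonoid S) (J : Ideal (Localization U)),
      tightClosure p J = (J : Set (Localization U))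

section AuxTC
section basic
variable {R : Type*} [CommRing R]

lemma one_mem_primeComplement : (1 : R) ∈ primeComplement R := by
  intro P hP h1
  exact hP.1.1.ne_top ((Ideal.eq_top_iff_one _).2 h1)

lemma mul_mem_primeComplement {a b : R} (ha : a ∈ primeComplement R)
    (hb : b ∈ primeComplement R) : a * b ∈ primeComplement R := by
  intro P hP hab
  rcases hP.1.1.mem_or_mem hab with h | h
  · exact ha P hP h
  · exact hb P hP h

lemma primeComplement_domain [IsDomain R] : primeComplement R = {x : R | x ≠ 0} := by
  have hmin : minimalPrimes R = {⊥} := by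
    haveI : (⊥ : Ideal R).IsPrime := Ideal.bot_prime
    exact Ideal.minimalPrimes_eq_subsingleton_self (I := ⊥)
  ext x
  simp [primeComplement, hmin, Ideal.mem_bot]

lemma mem_primeComplement_of_ne_zero [IsDomain R] {x : R} (hx : x ≠ 0) :
    x ∈ primeComplement R := by rw [primeComplement_domain]; exact hx

lemma ne_zero_of_mem_primeComplement [IsDomain R] {x : R} (hx : x ∈ primeComplement R) :
    x ≠ 0 := by rwa [primeComplement_domain] at hx

-- easy direction of frobeniusPower vs map
lemma frobeniusPower_map_le {S : Type*} [CommRing S] (f : R →+* S) (I : Ideal R) (q : ℕ) :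
    Ideal.map f (I.frobeniusPower q) ≤ (Ideal.map f I).frobeniusPower q := by
  rw [Ideal.frobeniusPower, Ideal.map_span]
  apply Ideal.span_le.2
  rintro _ ⟨_, ⟨x, hx, rfl⟩, rfl⟩
  exact Ideal.subset_span ⟨f x, Ideal.mem_map_of_mem f hx, by simp [map_pow]⟩

lemma frobeniusPower_span (p : ℕ) [Fact p.Prime] [CharP R p] (G : Set R) (e : ℕ) :
    (Ideal.span G).frobeniusPower (p ^ e) = Ideal.span ((fun x => x ^ p ^ e) '' G) := by
  haveI : ExpChar R p := ExpChar.prime (Fact.out)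
  apply le_antisymm
  · rw [Ideal.frobeniusPower]
    apply Ideal.span_le.2
    rintro _ ⟨x, hx, rfl⟩
    induction hx using Submodule.span_induction with
    | mem y hy => exact Ideal.subset_span ⟨y, hy, rfl⟩
    | zero =>
        have : (0 : R) ^ p ^ e = 0 := zero_pow (pow_ne_zero e (Fact.out : p.Prime).ne_zero)
        simpa [this] using (Ideal.span ((fun x => x ^ p ^ e) '' G)).zero_mem
    | add y z _ _ hy hz =>
        show (y + z) ^ p ^ e ∈ _
        rw [add_pow_char_pow]
        exact Ideal.add_mem _ hy hz
    | smul r y _ hy =>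
        show (r • y) ^ p ^ e ∈ _
        rw [smul_eq_mul, mul_pow]
        exact Ideal.mul_mem_left _ _ hy
  · apply Ideal.span_le.2
    rintro _ ⟨x, hx, rfl⟩
    exact Ideal.subset_span ⟨x, Ideal.subset_span hx, rfl⟩

lemma frobeniusPower_map (p : ℕ) [Fact p.Prime] {S : Type*} [CommRing S] [CharP S p]
    (f : R →+* S) (I : Ideal R) (e : ℕ) :
    (Ideal.map f I).frobeniusPower (p ^ e) = Ideal.map f (I.frobeniusPower (p ^ e)) := by
  rw [Ideal.map, frobeniusPower_span, Ideal.frobeniusPower, Ideal.map_span, Set.image_image,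
    Set.image_image]
  congr 1
  ext y
  constructor
  · rintro ⟨x, hx, rfl⟩; exact ⟨x, hx, by simp [map_pow]⟩
  · rintro ⟨x, hx, rfl⟩; exact ⟨x, hx, by simp [map_pow]⟩

end basic

section tcIdeal
variable (p : ℕ) [Fact p.Prime] {R : Type*} [CommRing R] [CharP R p]

/-- The tight closure as an ideal (in a ring of characteristic `p`). -/
def tightClosureIdeal (I : Ideal R) : Ideal R where
  carrier := tightClosure p I
  zero_mem' := by
    refine ⟨1, one_mem_primeComplement, 0, fun e _ => ?_⟩
    have : (0 : R) ^ p ^ e = 0 := zero_pow (pow_ne_zero e (Fact.out : p.Prime).ne_zero)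
    simp only [this, mul_zero]
    exact (I.frobeniusPower (p ^ e)).zero_mem
  add_mem' := by
    haveI : ExpChar R p := ExpChar.prime Fact.out
    rintro a b ⟨c₁, hc₁, N₁, h₁⟩ ⟨c₂, hc₂, N₂, h₂⟩
    refine ⟨c₁ * c₂, mul_mem_primeComplement hc₁ hc₂, max N₁ N₂, fun e he => ?_⟩
    rw [add_pow_char_pow]
    have : c₁ * c₂ * (a ^ p ^ e + b ^ p ^ e)
        = c₂ * (c₁ * a ^ p ^ e) + c₁ * (c₂ * b ^ p ^ e) := by ring
    rw [this]
    exact Ideal.add_mem _ (Ideal.mul_mem_left _ _ (h₁ e (le_trans (le_max_left _ _) he)))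
      (Ideal.mul_mem_left _ _ (h₂ e (le_trans (le_max_right _ _) he)))
  smul_mem' := by
    rintro r a ⟨c, hc, N, h⟩
    refine ⟨c, hc, N, fun e he => ?_⟩
    have : c * (r • a) ^ p ^ e = r ^ p ^ e * (c * a ^ p ^ e) := by
      rw [smul_eq_mul, mul_pow]; ring
    rw [this]
    exact Ideal.mul_mem_left _ _ (h e he)

lemma coe_tightClosureIdeal (I : Ideal R) :
    (tightClosureIdeal p I : Set R) = tightClosure p I := rfl

lemma span_tightClosure (I : Ideal R) :
    Ideal.span (tightClosure p I) = tightClosureIdeal p I := by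
  conv_lhs => rw [← coe_tightClosureIdeal p I]
  exact Ideal.span_eq _

end tcIdeal

section persist
variable (p : ℕ) {R S : Type*} [CommRing R] [CommRing S]

/-- Persistence of tight closure along a ring map preserving `R°`. -/
lemma tightClosure_persists (f : R →+* S)
    (hf : ∀ c ∈ primeComplement R, f c ∈ primeComplement S)
    {I : Ideal R} {z : R} (hz : z ∈ tightClosure p I) :
    f z ∈ tightClosure p (I.map f) := by
  obtain ⟨c, hc, N, h⟩ := hz
  refine ⟨f c, hf c hc, N, fun e he => ?_⟩
  have : f c * f z ^ p ^ e = f (c * z ^ p ^ e) := by rw [map_mul, map_pow]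
  rw [this]
  exact frobeniusPower_map_le f I (p ^ e) (Ideal.mem_map_of_mem f (h e he))

end persist

section functional
variable {R S : Type*} [CommRing R] [IsDomain R] [CommRing S] [IsDomain S] [Algebra R S]

/-- Over a domain, every module-finite extension domain admits an `R`-linear
functional not vanishing at `1`. -/
lemma exists_functional (hinj : Function.Injective (algebraMap R S)) [Module.Finite R S] :
    ∃ φ : S →ₗ[R] R, φ 1 ≠ 0 := by
  classical
  obtain ⟨n, s, hs⟩ := Module.Finite.exists_fin (R := R) (M := S)
  obtain ⟨T, hTli, hTmax⟩ := exists_maximal_linearIndepOn R s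
  set F : Submodule R S := Submodule.span R (Set.range fun x : T => s x) with hF
  have hrange : Set.range (fun x : T => s x) = s '' T := by
    ext y; simp [Set.mem_image]
  -- choose torsion coefficients
  have hchoice : ∀ i : Fin n, ∃ a : R, a ≠ 0 ∧ a • s i ∈ F := by
    intro i
    by_cases hi : i ∈ T
    · exact ⟨1, one_ne_zero, by
        rw [one_smul]
        exact Submodule.subset_span ⟨⟨i, hi⟩, rfl⟩⟩
    · obtain ⟨a, ha, haF⟩ := hTmax i hi
      exact ⟨a, ha, by rwa [hF, hrange]⟩
  choose aa haa haaF using hchoice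
  set d : R := ∏ i : Fin n, aa i with hd
  have hdne : d ≠ 0 := Finset.prod_ne_zero_iff.2 fun i _ => haa i
  have hdF : ∀ x : S, d • x ∈ F := by
    intro x
    have hx : x ∈ Submodule.span R (Set.range s) := by rw [hs]; trivial
    induction hx using Submodule.span_induction with
    | mem y hy =>
        obtain ⟨i, rfl⟩ := hy
        have hprod : (∏ j ∈ Finset.univ.erase i, aa j) * aa i = d :=
          Finset.prod_erase_mul _ _ (Finset.mem_univ i)
        have : d • s i = (∏ j ∈ Finset.univ.erase i, aa j) • (aa i • s i) := by
          rw [smul_smul, hprod]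
        rw [this]
        exact F.smul_mem _ (haaF i)
    | zero => simpa using F.zero_mem
    | add y z _ _ hy hz => rw [smul_add]; exact F.add_mem hy hz
    | smul r y _ hy => rw [smul_comm]; exact F.smul_mem r hy
  -- basis of F
  let b : Module.Basis T R F := Module.Basis.span hTli
  let m : S →ₗ[R] F := LinearMap.codRestrict F (d • LinearMap.id) hdF
  have hm1 : ((m 1 : F) : S) = algebraMap R S d := by
    simp [m, Algebra.algebraMap_eq_smul_one]
  have hm1ne : m 1 ≠ 0 := by
    intro h
    apply hdne
    apply hinj
    rw [map_zero, ← hm1, h, Submodule.coe_zero]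
  have hrepr : b.repr (m 1) ≠ 0 := fun h => hm1ne (by
    have := congrArg b.repr.symm h
    simpa using this)
  obtain ⟨j, hj⟩ := Finsupp.ne_iff.1 hrepr
  refine ⟨(b.coord j).comp m, ?_⟩
  simpa [Module.Basis.coord] using hj

/-- In a module-finite extension of domains, every nonzero element of `S`
divides a nonzero element of `R`. -/
lemma exists_nonzero_multiple (hinj : Function.Injective (algebraMap R S))
    [Module.Finite R S] {c : S} (hc : c ≠ 0) :
    ∃ (r : R) (b : S), r ≠ 0 ∧ algebraMap R S r = c * b := by
  have hint : IsIntegral R c := IsIntegral.of_finite R c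
  obtain ⟨P, hPmonic, hPeval0⟩ := hint
  have hPeval : Polynomial.aeval c P = 0 := by rw [Polynomial.aeval_def]; exact hPeval0
  have hPne : P ≠ 0 := hPmonic.ne_zero
  clear hPmonic hPeval0
  suffices H : ∀ (n : ℕ) (P : Polynomial R), P.natDegree = n → P ≠ 0 →
      Polynomial.aeval c P = 0 → ∃ (r : R) (b : S), r ≠ 0 ∧ algebraMap R S r = c * b from
    H P.natDegree P rfl hPne hPeval
  intro n
  induction n using Nat.strong_induction_on with
  | _ n ih =>
    intro P hn hPne hPeval
    by_cases h0 : P.coeff 0 = 0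
    · -- P = divX P * X
      have hP : P = P.divX * Polynomial.X := by
        conv_lhs => rw [← Polynomial.divX_mul_X_add P]
        rw [h0, map_zero, add_zero]
      have hdivne : P.divX ≠ 0 := fun h => hPne (by rw [hP, h, zero_mul])
      have heval : Polynomial.aeval c P.divX = 0 := by
        have : (Polynomial.aeval c) P = (Polynomial.aeval c) P.divX * c := by
          nth_rewrite 1 [hP]; simp
        rw [hPeval] at this
        rcases mul_eq_zero.1 this.symm with h | h
        · exact h
        · exact absurd h hc
      have hdeg : P.divX.natDegree < n := by
        have h1 : P.natDegree ≠ 0 := by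
          intro h
          obtain ⟨a, ha⟩ := Polynomial.natDegree_eq_zero.1 h
          apply hPne
          rw [← ha]
          have : a = 0 := by
            have := h0
            rw [← ha] at this
            simpa using this
          rw [this, map_zero]
        rw [Polynomial.natDegree_divX_eq_natDegree_tsub_one, hn]
        rw [hn] at h1
        omega
      exact ih P.divX.natDegree hdeg P.divX rfl hdivne heval
    · -- constant coefficient nonzero
      refine ⟨P.coeff 0, -(Polynomial.aeval c P.divX), h0, ?_⟩
      have hdx := Polynomial.divX_mul_X_add P
      have h2 : (Polynomial.aeval c) (P.divX * Polynomial.X + Polynomial.C (P.coeff 0)) = 0 := by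
        rw [hdx, hPeval]
      simp only [map_add, map_mul, Polynomial.aeval_X, Polynomial.aeval_C] at h2
      have : algebraMap R S (P.coeff 0) = -((Polynomial.aeval c) P.divX * c) := by
        linear_combination h2
      rw [this]; ring

end functional

section contract
variable {R S : Type*} [CommRing R] [CommRing S] [Algebra R S]

/-- Elements of the extension of an ideal are sent back into the ideal by any
`R`-linear functional. -/
lemma apply_mem_of_mem_map (φ : S →ₗ[R] R) (K : Ideal R) {w : S}
    (hw : w ∈ Ideal.map (algebraMap R S) K) : φ w ∈ K := by
  -- first: map K ⊆ K • ⊤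
  have hsub : (Ideal.map (algebraMap R S) K : Set S) ⊆
      (K • (⊤ : Submodule R S) : Submodule R S) := by
    intro w hw
    rw [Ideal.map, Ideal.span, ← Submodule.span_eq (K • (⊤ : Submodule R S))] at *
    induction hw using Submodule.span_induction with
    | mem y hy =>
        obtain ⟨k, hk, rfl⟩ := hy
        rw [Submodule.span_eq]
        rw [Algebra.algebraMap_eq_smul_one]
        exact Submodule.smul_mem_smul hk trivial
    | zero => exact Submodule.zero_mem _
    | add y z _ _ hy hz => exact Submodule.add_mem _ hy hz
    | smul t y _ hy =>
        rw [Submodule.span_eq] at hy ⊢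
        rw [smul_eq_mul]
        refine Submodule.smul_induction_on hy (fun k hk n _ => ?_) (fun y z hy hz => ?_)
        · have : t * (k • n) = k • (t * n) := by
            rw [Algebra.smul_def, Algebra.smul_def]; ring
          rw [this]
          exact Submodule.smul_mem_smul hk trivial
        · rw [mul_add]; exact Submodule.add_mem _ hy hz
  have hw2 : w ∈ (K • (⊤ : Submodule R S) : Submodule R S) := hsub hw
  refine Submodule.smul_induction_on hw2 (fun k hk n _ => ?_) (fun y z hy hz => ?_)
  · rw [map_smul, smul_eq_mul]
    exact Ideal.mul_mem_right _ _ hk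
  · rw [map_add]; exact K.add_mem hy hz

variable [IsDomain R] [IsDomain S] (p : ℕ) [Fact p.Prime] [CharP R p]

/-- Contraction of tight closure along a module-finite extension of domains. -/
lemma tightClosure_contract (hinj : Function.Injective (algebraMap R S))
    [Module.Finite R S] (I : Ideal R) (x : R)
    (hx : algebraMap R S x ∈ tightClosure p (I.map (algebraMap R S))) :
    x ∈ tightClosure p I := by
  haveI : CharP S p := charP_of_injective_ringHom hinj p
  obtain ⟨c, hc, N, h⟩ := hx
  have hcne : c ≠ 0 := ne_zero_of_mem_primeComplement hc
  obtain ⟨r, bb, hr, hrb⟩ := exists_nonzero_multiple hinj hcne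
  obtain ⟨φ, hφ⟩ := exists_functional hinj
  set d : R := φ 1 with hd
  refine ⟨d * r, mem_primeComplement_of_ne_zero (mul_ne_zero hφ hr), N, fun e he => ?_⟩
  have h1 : c * (algebraMap R S x) ^ p ^ e ∈
      Ideal.map (algebraMap R S) (I.frobeniusPower (p ^ e)) := by
    rw [← frobeniusPower_map p (algebraMap R S) I e]
    exact h e he
  have h2 : algebraMap R S (r * x ^ p ^ e) ∈
      Ideal.map (algebraMap R S) (I.frobeniusPower (p ^ e)) := by
    have : algebraMap R S (r * x ^ p ^ e) = bb * (c * (algebraMap R S x) ^ p ^ e) := by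
      rw [map_mul, hrb, map_pow]; ring
    rw [this]
    exact Ideal.mul_mem_left _ _ h1
  have h3 : φ (algebraMap R S (r * x ^ p ^ e)) ∈ I.frobeniusPower (p ^ e) :=
    apply_mem_of_mem_map φ _ h2
  have h4 : φ (algebraMap R S (r * x ^ p ^ e)) = (r * x ^ p ^ e) * d := by
    rw [Algebra.algebraMap_eq_smul_one, map_smul, smul_eq_mul, hd]
  rw [h4] at h3
  have : d * r * x ^ p ^ e = r * x ^ p ^ e * d := by ring
  rw [this]
  exact h3

end contract

section loc
variable {R S : Type*} [CommRing R] [CommRing S] (f : R →+* S) (U : Submonoid R)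

lemma le_comap_map : U ≤ (U.map f).comap f :=
  fun u hu => Submonoid.mem_map_of_mem f hu

/-- Contraction of extended ideals commutes with localization. -/
lemma loc_contract (J : Ideal S) (x : Localization U)
    (hx : IsLocalization.map (Localization (U.map f)) f (le_comap_map f U) x ∈
      J.map (algebraMap S (Localization (U.map f)))) :
    x ∈ (J.comap f).map (algebraMap R (Localization U)) := by
  obtain ⟨r, u, rfl⟩ := IsLocalization.mk'_surjective U x
  rw [IsLocalization.map_mk'] at hx
  rw [IsLocalization.mk'_mem_map_algebraMap_iff (U.map f)] at hx
  obtain ⟨_, ⟨w, hw, rfl⟩, hmem⟩ := hx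
  rw [IsLocalization.mk'_mem_map_algebraMap_iff U]
  refine ⟨w, hw, ?_⟩
  rw [Ideal.mem_comap, map_mul]
  exact hmem

end loc

end AuxTC

/-- **Lemma 2.** A Noetherian domain that has a module-finite extension domain in
which tight closure commutes with localization itself has tight closure commuting
with localization. -/
theorem tightClosure_commutes_localization_of_module_finite_extension
    (p : ℕ) [Fact p.Prime] (R : Type) [CommRing R] [IsDomain R] [IsNoetherianRing R]
    [CharP R p] (S : Type) [CommRing S] [IsDomain S] [Algebra R S]
    (hinj : Function.Injective (algebraMap R S)) [Module.Finite R S]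
    (hS : TightClosureCommutesWithLocalization p S) :
    TightClosureCommutesWithLocalization p R := by
  intro I U
  by_cases h0 : (0 : R) ∈ U
  · -- the localization is trivial
    haveI : Subsingleton (Localization U) :=
      IsLocalization.subsingleton (S := Localization U) h0
    ext x
    constructor
    · intro _
      refine ⟨1, one_mem_primeComplement, 0, fun e _ => ?_⟩
      have : (1 : Localization U) * x ^ p ^ e = 0 := Subsingleton.elim _ _
      rw [this]
      exact Ideal.zero_mem _
    · intro _
      have : x = 0 := Subsingleton.elim _ _
      rw [this]
      exact Ideal.zero_mem _
  · -- nontrivial case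
    set f := algebraMap R S with hf
    have hU : U ≤ nonZeroDivisors R := fun u hu =>
      mem_nonZeroDivisors_of_ne_zero (fun h => h0 (h ▸ hu))
    haveI hAdom : IsDomain (Localization U) :=
      IsLocalization.isDomain_localization hU
    have hg : Function.Injective (algebraMap R (Localization U)) :=
      IsLocalization.injective _ hU
    haveI : CharP (Localization U) p :=
      charP_of_injective_ringHom hg p
    haveI : CharP S p := charP_of_injective_ringHom hinj p
    set U' : Submonoid S := U.map f with hU'
    have hU'0 : (0 : S) ∉ U' := by
      rintro ⟨u, hu, hu0⟩
      have : u = 0 := hinj (by rw [hu0, map_zero])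
      exact h0 (this ▸ hu)
    have hU'le : U' ≤ nonZeroDivisors S := fun u hu =>
      mem_nonZeroDivisors_of_ne_zero (fun h => hU'0 (h ▸ hu))
    haveI hBdom : IsDomain (Localization U') :=
      IsLocalization.isDomain_localization hU'le
    have hh : Function.Injective (algebraMap S (Localization U')) :=
      IsLocalization.injective _ hU'le
    haveI : CharP (Localization U') p :=
      charP_of_injective_ringHom hh p
    set ψ : Localization U →+* Localization U' :=
      IsLocalization.map (Localization U') f (le_comap_map f U) with hψ
    have hψg : ∀ r : R, ψ (algebraMap R (Localization U) r)
        = algebraMap S (Localization U') (f r) := fun r => IsLocalization.map_eq _ r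
    have hψinj : Function.Injective ψ := by
      rw [injective_iff_map_eq_zero]
      intro x hx
      obtain ⟨r, u, rfl⟩ := IsLocalization.mk'_surjective U x
      rw [hψ, IsLocalization.map_mk', IsLocalization.mk'_eq_zero_iff] at hx
      obtain ⟨⟨_, w, hw, rfl⟩, hm⟩ := hx
      rw [IsLocalization.mk'_eq_zero_iff]
      refine ⟨⟨w, hw⟩, hinj ?_⟩
      rw [map_mul, map_zero]
      exact hm
    -- prime complements map to prime complements
    have hgpc : ∀ c ∈ primeComplement R, algebraMap R (Localization U) c ∈
        primeComplement (Localization U) := fun c hc =>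
      mem_primeComplement_of_ne_zero fun h =>
        ne_zero_of_mem_primeComplement hc (hg (h.trans (map_zero _).symm))
    have hψpc : ∀ c ∈ primeComplement (Localization U), ψ c ∈
        primeComplement (Localization U') := fun c hc =>
      mem_primeComplement_of_ne_zero fun h =>
        ne_zero_of_mem_primeComplement hc (hψinj (h.trans (map_zero _).symm))
    ext x
    constructor
    · -- easy direction: persistence
      intro hx
      have hle : Ideal.map (algebraMap R (Localization U)) (Ideal.span (tightClosure p I)) ≤
          tightClosureIdeal p (Ideal.map (algebraMap R (Localization U)) I) := by
        rw [Ideal.map_le_iff_le_comap, span_tightClosure]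
        intro z hz
        exact tightClosure_persists p _ hgpc hz
      exact hle hx
    · -- hard direction
      intro hx
      -- push into the localization of S
      have h1 : ψ x ∈ tightClosure p
          ((Ideal.map (algebraMap R (Localization U)) I).map ψ) :=
        tightClosure_persists p ψ hψpc hx
      have h2 : (Ideal.map (algebraMap R (Localization U)) I).map ψ
          = (I.map f).map (algebraMap S (Localization U')) := by
        rw [Ideal.map_map, Ideal.map_map, hψ, IsLocalization.map_comp]
      rw [h2] at h1
      -- use the hypothesis on S
      have h3 := hS (I.map f) U'
      rw [← h3] at h1
      -- contract back
      have h4 : x ∈ ((Ideal.span (tightClosure p (I.map f))).comap f).map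
          (algebraMap R (Localization U)) := loc_contract f U _ x h1
      have h5 : (Ideal.span (tightClosure p (I.map f))).comap f ≤ tightClosureIdeal p I := by
        intro y hy
        rw [Ideal.mem_comap, span_tightClosure] at hy
        exact tightClosure_contract p hinj I y hy
      have h6 := Ideal.map_mono (f := algebraMap R (Localization U)) h5 h4
      rwa [← span_tightClosure] at h6
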